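/- For every cube Q in ℝⁿ (a product of n intervals of equal length), there exists a shifted dyadic cube Q' (i.e., a cube of the form 2^j(k + (0,1)^n + (-1)^j σ) for some j ∈ ℤ, k ∈ ℤⁿ, σ ∈ {0, 1/3, 2/3}ⁿ) such that Q is contained in the cube with the same center as Q' and 7/10 of its side length, and the volumes satisfy |Q'| ≤ C|Q| and |Q| ≤ C|Q'| for an absolute constant C. -/

import Mathlib

open Set

/-- The open cube in `ℝⁿ` with center `c` and side length `ℓ`. -/
def cube (n : ℕ) (c : Fin n → ℝ) (ℓ : ℝ) : Set (Fin n → ℝ) :=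
  {x | ∀ i, |x i - c i| < ℓ / 2}

/-- Center of the shifted dyadic cube `2^j (k + (0,1)^n + (-1)^j σ)`. -/
noncomputable def sdcCenter (n : ℕ) (j : ℤ) (k : Fin n → ℤ) (σ : Fin n → ℝ) : Fin n → ℝ :=
  fun i => (2 : ℝ) ^ j * ((k i : ℝ) + 1 / 2 + (-1 : ℝ) ^ j * σ i)

/-- For every cube `Q` there is a shifted dyadic cube `Q'` with `Q ⊆ (7/10)Q'`
and `|Q'| ∼ |Q|`. -/
theorem stmt0 (n : ℕ) (hn : 0 < n) :
    ∃ C : ℝ, 0 < C ∧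
      ∀ (c : Fin n → ℝ) (ℓ : ℝ), 0 < ℓ →
        ∃ (j : ℤ) (k : Fin n → ℤ) (σ : Fin n → ℝ),
          (∀ i, σ i = 0 ∨ σ i = 1 / 3 ∨ σ i = 2 / 3) ∧
          cube n c ℓ ⊆ cube n (sdcCenter n j k σ) (7 / 10 * (2 : ℝ) ^ j) ∧
          ((2 : ℝ) ^ j) ^ n ≤ C * ℓ ^ n ∧ ℓ ^ n ≤ C * ((2 : ℝ) ^ j) ^ n := by
  refine ⟨40 ^ n, by positivity, fun c ℓ hℓ => ?_⟩
  set j1 : ℤ := Int.clog 2 (10 * ℓ) with hj1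
  set j : ℤ := if Even j1 then j1 else j1 + 1 with hj
  have hje : Even j := by
    rcases Int.even_or_odd j1 with h | h
    · simp [hj, h]
    · have : ¬ Even j1 := Int.not_even_iff_odd.2 h
      simp [hj, this, Int.even_add_one, Int.not_even_iff_odd.2 h, h]
  have hjle : j1 ≤ j := by
    rcases le_or_gt j1 j with h | h
    · exact h
    · exfalso; rcases hj ▸ h with h'
      split_ifs at h' <;> omega
  have hjle' : j ≤ j1 + 1 := by
    rw [hj]; split_ifs <;> omega
  have h2j_pos : (0 : ℝ) < (2 : ℝ) ^ j := by positivity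
  have hmono : ∀ a b : ℤ, a ≤ b → (2 : ℝ) ^ a ≤ (2 : ℝ) ^ b := fun a b h =>
    zpow_le_zpow_right₀ (by norm_num) h
  have hlow : 10 * ℓ ≤ (2 : ℝ) ^ j := by
    have h1 : 10 * ℓ ≤ ((2 : ℕ) : ℝ) ^ j1 := Int.self_le_zpow_clog (by norm_num) (10 * ℓ)
    have : ((2 : ℕ) : ℝ) = (2 : ℝ) := by norm_num
    rw [this] at h1
    exact h1.trans (hmono _ _ hjle)
  have hhigh : (2 : ℝ) ^ j < 40 * ℓ := by
    have h1 : ((2 : ℕ) : ℝ) ^ (j1 - 1) < 10 * ℓ :=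
      Int.zpow_pred_clog_lt_self (by norm_num) (by linarith)
    have hc : ((2 : ℕ) : ℝ) = (2 : ℝ) := by norm_num
    rw [hc] at h1
    have h2 : (2 : ℝ) ^ j ≤ (2 : ℝ) ^ (j1 + 1) := hmono _ _ hjle'
    have h3 : (2 : ℝ) ^ (j1 + 1) = 4 * (2 : ℝ) ^ (j1 - 1) := by
      rw [show j1 + 1 = (j1 - 1) + 2 by ring, zpow_add₀ (by norm_num : (2:ℝ) ≠ 0)]
      ring
    calc (2 : ℝ) ^ j ≤ 4 * (2 : ℝ) ^ (j1 - 1) := by rw [← h3]; exact h2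
      _ < 4 * (10 * ℓ) := by linarith
      _ = 40 * ℓ := by ring
  have hneg1 : ((-1 : ℝ)) ^ j = 1 := hje.neg_one_zpow
  set t : Fin n → ℤ := fun i => round (3 * (c i / (2 : ℝ) ^ j - 1 / 2)) with ht
  refine ⟨j, fun i => t i / 3, fun i => ((t i % 3 : ℤ) : ℝ) / 3, ?_, ?_, ?_, ?_⟩
  · intro i
    have h0 : 0 ≤ t i % 3 := Int.emod_nonneg _ (by norm_num)
    have h1 : t i % 3 < 3 := Int.emod_lt_of_pos _ (by norm_num)
    interval_cases h : (t i % 3) <;> simp [h]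
  · intro x hx i
    have hxi := hx i
    have hcent : sdcCenter n j (fun i => t i / 3) (fun i => ((t i % 3 : ℤ) : ℝ) / 3) i
        = (2 : ℝ) ^ j * ((t i : ℝ) / 3 + 1 / 2) := by
      simp only [sdcCenter, hneg1, one_mul]
      have : ((t i / 3 : ℤ) : ℝ) + ((t i % 3 : ℤ) : ℝ) / 3 = (t i : ℝ) / 3 := by
        have := Int.mul_ediv_add_emod (t i) 3
        have hcast : ((3 * (t i / 3) + t i % 3 : ℤ) : ℝ) = (t i : ℝ) := by rw [this]
        push_cast at hcast
        linarith
      rw [show ((t i / 3 : ℤ) : ℝ) + 1 / 2 + ((t i % 3 : ℤ) : ℝ) / 3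
          = (((t i / 3 : ℤ) : ℝ) + ((t i % 3 : ℤ) : ℝ) / 3) + 1 / 2 by ring, this]
    rw [hcent]
    have hround : |3 * (c i / (2 : ℝ) ^ j - 1 / 2) - (t i : ℝ)| ≤ 1 / 2 := abs_sub_round _
    have hdist : |c i - (2 : ℝ) ^ j * ((t i : ℝ) / 3 + 1 / 2)| ≤ (2 : ℝ) ^ j / 6 := by
      have : c i - (2 : ℝ) ^ j * ((t i : ℝ) / 3 + 1 / 2)
          = (2 : ℝ) ^ j / 3 * (3 * (c i / (2 : ℝ) ^ j - 1 / 2) - (t i : ℝ)) := by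
        field_simp
        ring
      rw [this, abs_mul, abs_of_pos (by positivity : (0:ℝ) < (2:ℝ)^j / 3)]
      calc (2 : ℝ) ^ j / 3 * |3 * (c i / (2 : ℝ) ^ j - 1 / 2) - (t i : ℝ)|
          ≤ (2 : ℝ) ^ j / 3 * (1 / 2) := by
            exact mul_le_mul_of_nonneg_left hround (by positivity)
        _ = (2 : ℝ) ^ j / 6 := by ring
    have hℓj : ℓ / 2 ≤ (2 : ℝ) ^ j / 20 := by linarith
    calc |x i - (2 : ℝ) ^ j * ((t i : ℝ) / 3 + 1 / 2)|
        ≤ |x i - c i| + |c i - (2 : ℝ) ^ j * ((t i : ℝ) / 3 + 1 / 2)| := by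
          have := abs_sub_abs_le_abs_sub (x i) (c i)
          exact (abs_sub_le (x i) (c i) _)
      _ < ℓ / 2 + (2 : ℝ) ^ j / 6 := by linarith
      _ ≤ (2 : ℝ) ^ j / 20 + (2 : ℝ) ^ j / 6 := by linarith
      _ < 7 / 10 * (2 : ℝ) ^ j / 2 := by linarith
  · have h1 : (2 : ℝ) ^ j ≤ 40 * ℓ := hhigh.le
    calc ((2 : ℝ) ^ j) ^ n ≤ (40 * ℓ) ^ n := pow_le_pow_left₀ h2j_pos.le h1 n
      _ = 40 ^ n * ℓ ^ n := mul_pow _ _ _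
  · have h1 : ℓ ≤ (2 : ℝ) ^ j := by linarith
    have h2 : ℓ ^ n ≤ ((2 : ℝ) ^ j) ^ n := pow_le_pow_left₀ hℓ.le h1 n
    have h3 : (1 : ℝ) ≤ 40 ^ n := one_le_pow₀ (by norm_num)
    nlinarith [pow_nonneg h2j_pos.le n]
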